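/- Let (E,d) be a complete separable metric space with a Borel probability measure μ and let c > 0 be the universal constant of the multi-set concentration theorem. Let A₁,…,A_k be measurable sets with (μ(A₁),…,μ(A_k)) ∈ Δ_k, set r = (1/2)·min_{i≠j} d(A_i,A_j), assume r > 0, and let A₀ = E \ (A₁ ∪ ⋯ ∪ A_k)_r. Then λ^{(k)} ≤ (1/r²)·ψ((1/c)·min_{1≤i≤k} log(μ(A_i)/μ(A₀))), where ψ(x) = max(x, x²). -/

import Mathlib

open MeasureTheory Filter Topology
open scoped ENNReal NNReal

noncomputable def localLip {E : Type*} [MetricSpace E] (f : E → ℝ) (x : E) : ℝ≥0∞ :=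
  Filter.limsup (fun y => ENNReal.ofReal (|f x - f y| / dist x y)) (𝓝[≠] x)

noncomputable def lambdaK {E : Type*} [MetricSpace E] [MeasurableSpace E]
    (μ : Measure E) (k : ℕ) : ℝ :=
  (⨅ (V : Submodule ℝ (E → ℝ)) (_ : Module.finrank ℝ V = k + 1)
      (_ : ∀ f ∈ V, MemLp f 2 μ ∧ (∫⁻ x, (localLip f x) ^ 2 ∂μ) < ⊤),
    ⨆ (f : E → ℝ) (_ : f ∈ V) (_ : f ≠ 0),
      (∫⁻ x, (localLip f x) ^ 2 ∂μ) / (∫⁻ x, ENNReal.ofReal ((f x) ^ 2) ∂μ)).toReal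

noncomputable def distSet {E : Type*} [MetricSpace E] (A B : Set E) : ℝ :=
  sInf (Set.image2 dist A B)

def memDelta {k : ℕ} (a : Fin k → ℝ) : Prop :=
  (∀ i, 0 ≤ a i ∧ a i ≤ 1) ∧ (∑ j, a j) ≤ 1 ∧ (∀ i, 1 ≤ a i + ∑ j, a j)

noncomputable def minPairDist {E : Type*} [MetricSpace E] {k : ℕ} (A : Fin k → Set E) : ℝ :=
  sInf {d : ℝ | ∃ i j : Fin k, i ≠ j ∧ d = distSet (A i) (A j)}

universe u

/-- The statement of the multi-set concentration theorem, with constant `c`. -/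
def MultiSetConc (c : ℝ) : Prop :=
  ∀ (E : Type u) [MetricSpace E] [MeasurableSpace E] [BorelSpace E]
    [CompleteSpace E] [TopologicalSpace.SeparableSpace E]
    (μ : Measure E) [IsProbabilityMeasure μ]
    (k : ℕ), 1 ≤ k →
    ∀ A : Fin k → Set E, (∀ i, MeasurableSet (A i)) →
    (∀ i j, i ≠ j → 0 < distSet (A i) (A j)) →
    memDelta (fun i => (μ (A i)).toReal) →
    ∀ r : ℝ, 0 < r → (∀ i j, i ≠ j → 2 * r ≤ distSet (A i) (A j)) →
    1 - (1 - (μ (⋃ i, A i)).toReal) *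
        Real.exp (-(c * min (r ^ 2 * lambdaK μ k) (r * Real.sqrt (lambdaK μ k)))) ≤
      (μ (Metric.thickening r (⋃ i, A i))).toReal

noncomputable def psiR (x : ℝ) : ℝ := max x (x ^ 2)

/-- Bound on `λ⁽ᵏ⁾` obtained by inverting the multi-set concentration estimate. -/
theorem stmt2 {E : Type u} [MetricSpace E] [MeasurableSpace E] [BorelSpace E]
    [CompleteSpace E] [TopologicalSpace.SeparableSpace E]
    (μ : Measure E) [IsProbabilityMeasure μ]
    (c : ℝ) (hc : 0 < c) (hthm : MultiSetConc.{u} c)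
    (k : ℕ) (hk : 1 ≤ k) (A : Fin k → Set E) (hA : ∀ i, MeasurableSet (A i))
    (hΔ : memDelta (fun i => (μ (A i)).toReal))
    (hApos : ∀ i, 0 < (μ (A i)).toReal)
    (r : ℝ) (hr : r = 1 / 2 * minPairDist A) (hrpos : 0 < r)
    (A0 : Set E) (hA0 : A0 = (Metric.thickening r (⋃ i, A i))ᶜ)
    (hA0pos : 0 < (μ A0).toReal) :
    lambdaK μ k ≤ 1 / r ^ 2 *
      psiR ((1 / c) * ⨅ i : Fin k, Real.log ((μ (A i)).toReal / (μ A0).toReal)) := by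
  have hlamnn : 0 ≤ lambdaK μ k := ENNReal.toReal_nonneg
  have hdnonneg : ∀ i j : Fin k, 0 ≤ distSet (A i) (A j) := by
    intro i j
    apply Real.sInf_nonneg
    rintro d ⟨x, hx, y, hy, rfl⟩
    exact dist_nonneg
  have hbdd : BddBelow {d : ℝ | ∃ i j : Fin k, i ≠ j ∧ d = distSet (A i) (A j)} := by
    refine ⟨0, ?_⟩
    rintro d ⟨i, j, hij, rfl⟩
    exact hdnonneg i j
  have h2r : ∀ i j : Fin k, i ≠ j → 2 * r ≤ distSet (A i) (A j) := by
    intro i j hij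
    have h1 : minPairDist A ≤ distSet (A i) (A j) := csInf_le hbdd ⟨i, j, hij, rfl⟩
    rw [hr]; linarith
  have hdpos : ∀ i j : Fin k, i ≠ j → 0 < distSet (A i) (A j) := by
    intro i j hij
    have := h2r i j hij; linarith
  have H := hthm E μ k hk A hA hdpos hΔ r hrpos h2r
  have hdisj : Pairwise (Function.onFun Disjoint A) := by
    intro i j hij
    rw [Function.onFun, Set.disjoint_left]
    intro x hxi hxj
    have h0 : distSet (A i) (A j) ≤ 0 := by
      apply csInf_le
      · exact ⟨0, by rintro d ⟨a, ha, b, hb, rfl⟩; exact dist_nonneg⟩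
      · exact ⟨x, hxi, x, hxj, dist_self x⟩
    exact absurd h0 (not_le.mpr (hdpos i j hij))
  have hU : (μ (⋃ i, A i)).toReal = ∑ i, (μ (A i)).toReal := by
    rw [measure_iUnion hdisj hA, tsum_fintype]
    exact ENNReal.toReal_sum (fun i _ => measure_ne_top μ _)
  have hth : (μ (Metric.thickening r (⋃ i, A i))).toReal = 1 - (μ A0).toReal := by
    have hms : MeasurableSet (Metric.thickening r (⋃ i, A i)) :=
      Metric.isOpen_thickening.measurableSet
    rw [hA0, prob_compl_eq_one_sub hms,
      ENNReal.toReal_sub_of_le prob_le_one ENNReal.one_ne_top, ENNReal.toReal_one]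
    ring
  set m := min (r ^ 2 * lambdaK μ k) (r * Real.sqrt (lambdaK μ k)) with hm
  have hm0 : 0 ≤ m :=
    le_min (mul_nonneg (sq_nonneg r) hlamnn) (mul_nonneg hrpos.le (Real.sqrt_nonneg _))
  have hA0le : ∀ i, (μ A0).toReal ≤ (μ (A i)).toReal * Real.exp (-(c * m)) := by
    intro i
    have h1 : 1 - (∑ j, (μ (A j)).toReal) ≤ (μ (A i)).toReal := by
      have := hΔ.2.2 i; simp only at this; linarith
    have hexp : (0:ℝ) ≤ Real.exp (-(c * m)) := (Real.exp_pos _).le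
    have h2 : (μ A0).toReal ≤ (1 - (μ (⋃ i, A i)).toReal) * Real.exp (-(c * m)) := by
      rw [hth] at H; linarith
    calc (μ A0).toReal ≤ (1 - (μ (⋃ i, A i)).toReal) * Real.exp (-(c * m)) := h2
      _ ≤ (μ (A i)).toReal * Real.exp (-(c * m)) := by
          apply mul_le_mul_of_nonneg_right _ hexp
          rw [hU]; exact h1
  have hcm : c * m ≤ ⨅ i : Fin k, Real.log ((μ (A i)).toReal / (μ A0).toReal) := by
    have : Nonempty (Fin k) := ⟨⟨0, hk⟩⟩
    apply le_ciInf
    intro i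
    rw [Real.le_log_iff_exp_le (div_pos (hApos i) hA0pos), le_div_iff₀ hA0pos]
    have he : Real.exp (c * m) * Real.exp (-(c * m)) = 1 := by
      rw [← Real.exp_add]; simp
    calc Real.exp (c * m) * (μ A0).toReal
        ≤ Real.exp (c * m) * ((μ (A i)).toReal * Real.exp (-(c * m))) :=
          mul_le_mul_of_nonneg_left (hA0le i) (Real.exp_pos _).le
      _ = (μ (A i)).toReal * (Real.exp (c * m) * Real.exp (-(c * m))) := by ring
      _ = (μ (A i)).toReal := by rw [he, mul_one]
  set L := (1 / c) * ⨅ i : Fin k, Real.log ((μ (A i)).toReal / (μ A0).toReal) with hLdef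
  have hmL : m ≤ L := by
    rw [hLdef]
    have h1 : m = (1 / c) * (c * m) := by field_simp
    rw [h1]
    exact mul_le_mul_of_nonneg_left hcm (by positivity)
  have hL0 : 0 ≤ L := le_trans hm0 hmL
  have hψ1 : L ≤ psiR L := le_max_left _ _
  have hψ2 : L ^ 2 ≤ psiR L := le_max_right _ _
  rcases le_total (r ^ 2 * lambdaK μ k) (r * Real.sqrt (lambdaK μ k)) with h | h
  · have h1 : r ^ 2 * lambdaK μ k ≤ L := le_trans (min_eq_left h).symm.le hmL
    have hr2 : (0:ℝ) < r ^ 2 := by positivity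
    have : lambdaK μ k ≤ psiR L / r ^ 2 := by
      rw [le_div_iff₀ hr2]
      calc lambdaK μ k * r ^ 2 = r ^ 2 * lambdaK μ k := by ring
        _ ≤ L := h1
        _ ≤ psiR L := hψ1
    calc lambdaK μ k ≤ psiR L / r ^ 2 := this
      _ = 1 / r ^ 2 * psiR L := by ring
  · have h1 : r * Real.sqrt (lambdaK μ k) ≤ L := by
      rw [hm, min_eq_right h] at hmL; exact hmL
    have hs : Real.sqrt (lambdaK μ k) ≤ L / r := by
      rw [le_div_iff₀ hrpos]; linarith [h1]
    have h2 : lambdaK μ k ≤ (L / r) ^ 2 := by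
      rw [← Real.sq_sqrt hlamnn]
      exact pow_le_pow_left₀ (Real.sqrt_nonneg _) hs 2
    calc lambdaK μ k ≤ (L / r) ^ 2 := h2
      _ = 1 / r ^ 2 * L ^ 2 := by field_simp
      _ ≤ 1 / r ^ 2 * psiR L := by
          apply mul_le_mul_of_nonneg_left hψ2 (by positivity)
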